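/- Let Y^{2n-2} = {Ā = B̄ = 0} ⊂ P^{2n} be the complete intersection with Ā = u₀³ + Σ_{i=0}^{n-1}(u_{2i+1}³ + 3u_{2i+1}²u_{2i+2} + 3u_{2i+1}u_{2i+2}² + 9u_{2i+2}³) and B̄ = u₀³ + Σ_{i=0}^{n-1}(u_{2i+1}³ - u_{2i+1}²u_{2i+2} + 3u_{2i+1}u_{2i+2}² - 3u_{2i+2}³), over a field of characteristic zero. Then the singular locus of Y^{2n-2} equals the scheme Z^{n-1} defined by u₀ = 0, u_{2i+1}² + 3u_{2i+2}² = 0 (i = 0,…,n-1), u_{2s+1}u_{2t+3} + 3u_{2s+2}u_{2t+4} = 0 and u_{2s+2}u_{2t+3} - u_{2s+1}u_{2t+4} = 0 (0 ≤ s ≤ t ≤ n-2), taken with its reduced structure. -/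
import Mathlib


open MvPolynomial

def oddVar (n : ℕ) (i : Fin n) : Fin (2 * n + 1) := ⟨2 * i.1 + 1, by have := i.2; omega⟩
def evenVar (n : ℕ) (i : Fin n) : Fin (2 * n + 1) := ⟨2 * i.1 + 2, by have := i.2; omega⟩
def sVar1 (n : ℕ) (s : Fin (n - 1)) : Fin (2 * n + 1) := ⟨2 * s.1 + 1, by have := s.2; omega⟩
def sVar2 (n : ℕ) (s : Fin (n - 1)) : Fin (2 * n + 1) := ⟨2 * s.1 + 2, by have := s.2; omega⟩
def tVar3 (n : ℕ) (t : Fin (n - 1)) : Fin (2 * n + 1) := ⟨2 * t.1 + 3, by have := t.2; omega⟩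
def tVar4 (n : ℕ) (t : Fin (n - 1)) : Fin (2 * n + 1) := ⟨2 * t.1 + 4, by have := t.2; omega⟩

noncomputable def Abar (k : Type) [Field k] (n : ℕ) : MvPolynomial (Fin (2 * n + 1)) k :=
  X ⟨0, by omega⟩ ^ 3 + ∑ i : Fin n,
    (X (oddVar n i) ^ 3 + 3 * X (oddVar n i) ^ 2 * X (evenVar n i)
      + 3 * X (oddVar n i) * X (evenVar n i) ^ 2 + 9 * X (evenVar n i) ^ 3)

noncomputable def Bbar (k : Type) [Field k] (n : ℕ) : MvPolynomial (Fin (2 * n + 1)) k :=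
  X ⟨0, by omega⟩ ^ 3 + ∑ i : Fin n,
    (X (oddVar n i) ^ 3 - X (oddVar n i) ^ 2 * X (evenVar n i)
      + 3 * X (oddVar n i) * X (evenVar n i) ^ 2 - 3 * X (evenVar n i) ^ 3)

/-- The `2 × 2` minors of the Jacobian matrix of `(Ā, B̄)`; their vanishing locus inside
`Y^{2n-2}` is the singular locus of the complete intersection `Y^{2n-2} = {Ā = B̄ = 0}`. -/
def jacobianMinors (k : Type) [Field k] (n : ℕ) : Set (MvPolynomial (Fin (2 * n + 1)) k) :=
  {P | ∃ i j : Fin (2 * n + 1),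
    P = pderiv i (Abar k n) * pderiv j (Bbar k n)
      - pderiv j (Abar k n) * pderiv i (Bbar k n)}

/-- The defining equations of the scheme `Z^{n-1} ⊂ P^{2n}`: `u₀ = 0`,
`u_{2i+1}² + 3u_{2i+2}² = 0` (`i = 0, …, n-1`), `u_{2s+1}u_{2t+3} + 3u_{2s+2}u_{2t+4} = 0`
and `u_{2s+2}u_{2t+3} - u_{2s+1}u_{2t+4} = 0` (`0 ≤ s ≤ t ≤ n-2`). -/
def Zequations (k : Type) [Field k] (n : ℕ) : Set (MvPolynomial (Fin (2 * n + 1)) k) :=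
  insert (X ⟨0, by omega⟩)
    ({P | ∃ i : Fin n, P = X (oddVar n i) ^ 2 + 3 * X (evenVar n i) ^ 2} ∪
     {P | ∃ s t : Fin (n - 1), s.1 ≤ t.1 ∧
        (P = X (sVar1 n s) * X (tVar3 n t) + 3 * X (sVar2 n s) * X (tVar4 n t) ∨
         P = X (sVar2 n s) * X (tVar3 n t) - X (sVar1 n s) * X (tVar4 n t))})

/- ### Auxiliary lemmas -/

lemma pderiv_num' {k : Type} [Field k] {σ : Type} (i : σ) (m : ℕ) [m.AtLeastTwo] :
    pderiv i (no_index (OfNat.ofNat m) : MvPolynomial σ k) = 0 := by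
  rw [← map_ofNat (C : k →+* MvPolynomial σ k), pderiv_C]

section Aux
variable {k : Type} [Field k] {n : ℕ}

lemma zero_ne_odd (i : Fin n) : (⟨0, by omega⟩ : Fin (2*n+1)) ≠ oddVar n i := by
  simp [oddVar, Fin.ext_iff]
lemma zero_ne_even (i : Fin n) : (⟨0, by omega⟩ : Fin (2*n+1)) ≠ evenVar n i := by
  simp [evenVar, Fin.ext_iff]
lemma zero_ne_odd' (i : Fin n) : (0 : Fin (2*n+1)) ≠ oddVar n i := by
  simp [oddVar, Fin.ext_iff]
lemma zero_ne_even' (i : Fin n) : (0 : Fin (2*n+1)) ≠ evenVar n i := by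
  simp [evenVar, Fin.ext_iff]
lemma odd_ne_even (i j : Fin n) : oddVar n i ≠ evenVar n j := by
  simp [oddVar, evenVar, Fin.ext_iff]; omega
lemma odd_ne_odd {i j : Fin n} (h : i ≠ j) : oddVar n i ≠ oddVar n j := by
  simp [oddVar, Fin.ext_iff, Fin.val_ne_of_ne h]
lemma even_ne_even {i j : Fin n} (h : i ≠ j) : evenVar n i ≠ evenVar n j := by
  simp [evenVar, Fin.ext_iff, Fin.val_ne_of_ne h]

lemma classifyVar (v : Fin (2*n+1)) :
    v = ⟨0, by omega⟩ ∨ (∃ a : Fin n, v = oddVar n a) ∨ (∃ a : Fin n, v = evenVar n a) := by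
  by_cases h0 : v.1 = 0
  · exact Or.inl (Fin.ext h0)
  by_cases h1 : v.1 % 2 = 1
  · refine Or.inr (Or.inl ⟨⟨(v.1 - 1)/2, by have := v.2; omega⟩, Fin.ext ?_⟩)
    show v.1 = 2 * ((v.1 - 1)/2) + 1; omega
  · refine Or.inr (Or.inr ⟨⟨(v.1 - 2)/2, by have := v.2; omega⟩, Fin.ext ?_⟩)
    show v.1 = 2 * ((v.1 - 2)/2) + 2; omega

/- partial derivatives -/

lemma pdA_zero : pderiv (⟨0, by omega⟩ : Fin (2*n+1)) (Abar k n)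
    = 3 * X (⟨0, by omega⟩ : Fin (2*n+1)) ^ 2 := by
  unfold Abar
  rw [map_add, map_sum, Finset.sum_eq_zero (fun i _ => by
    simp [pderiv_X_of_ne (zero_ne_odd i).symm, pderiv_X_of_ne (zero_ne_even i).symm,
      Pi.single_eq_of_ne (zero_ne_odd' i).symm, Pi.single_eq_of_ne (zero_ne_even' i).symm,
      Pi.single_eq_of_ne (zero_ne_odd i).symm, Pi.single_eq_of_ne (zero_ne_even i).symm,
      pderiv_num'])]
  simp [pderiv_X_self, Pi.single_eq_same, pderiv_num']
  try ring

lemma pdB_zero : pderiv (⟨0, by omega⟩ : Fin (2*n+1)) (Bbar k n)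
    = 3 * X (⟨0, by omega⟩ : Fin (2*n+1)) ^ 2 := by
  unfold Bbar
  rw [map_add, map_sum, Finset.sum_eq_zero (fun i _ => by
    simp [pderiv_X_of_ne (zero_ne_odd i).symm, pderiv_X_of_ne (zero_ne_even i).symm,
      Pi.single_eq_of_ne (zero_ne_odd' i).symm, Pi.single_eq_of_ne (zero_ne_even' i).symm,
      Pi.single_eq_of_ne (zero_ne_odd i).symm, Pi.single_eq_of_ne (zero_ne_even i).symm,
      pderiv_num'])]
  simp [pderiv_X_self, Pi.single_eq_same, pderiv_num']
  try ring

lemma pdA_odd (s : Fin n) : pderiv (oddVar n s) (Abar k n) =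
    3 * X (oddVar n s)^2 + 6 * X (oddVar n s) * X (evenVar n s) + 3 * X (evenVar n s)^2 := by
  unfold Abar
  rw [map_add, map_sum, Fintype.sum_eq_single s (fun i hi => by
    simp [pderiv_X_of_ne (odd_ne_odd hi), pderiv_X_of_ne (odd_ne_even s i).symm,
      Pi.single_eq_of_ne (odd_ne_even s i).symm, Pi.single_eq_of_ne (odd_ne_odd hi),
      pderiv_num'])]
  simp [pderiv_X_of_ne (zero_ne_odd s), pderiv_X_self, pderiv_X_of_ne (odd_ne_even s s).symm,
    Pi.single_eq_of_ne (odd_ne_even s s).symm, Pi.single_eq_same,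
    Pi.single_eq_of_ne (zero_ne_odd s), Pi.single_eq_of_ne (zero_ne_odd' s), pderiv_num']
  try ring

lemma pdB_odd (s : Fin n) : pderiv (oddVar n s) (Bbar k n) =
    3 * X (oddVar n s)^2 - 2 * X (oddVar n s) * X (evenVar n s) + 3 * X (evenVar n s)^2 := by
  unfold Bbar
  rw [map_add, map_sum, Fintype.sum_eq_single s (fun i hi => by
    simp [pderiv_X_of_ne (odd_ne_odd hi), pderiv_X_of_ne (odd_ne_even s i).symm,
      Pi.single_eq_of_ne (odd_ne_even s i).symm, Pi.single_eq_of_ne (odd_ne_odd hi),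
      pderiv_num'])]
  simp [pderiv_X_of_ne (zero_ne_odd s), pderiv_X_self, pderiv_X_of_ne (odd_ne_even s s).symm,
    Pi.single_eq_of_ne (odd_ne_even s s).symm, Pi.single_eq_same,
    Pi.single_eq_of_ne (zero_ne_odd s), Pi.single_eq_of_ne (zero_ne_odd' s), pderiv_num']
  try ring

lemma pdA_even (s : Fin n) : pderiv (evenVar n s) (Abar k n) =
    3 * X (oddVar n s)^2 + 6 * X (oddVar n s) * X (evenVar n s) + 27 * X (evenVar n s)^2 := by
  unfold Abar
  rw [map_add, map_sum, Fintype.sum_eq_single s (fun i hi => by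
    simp [pderiv_X_of_ne (even_ne_even hi), pderiv_X_of_ne (odd_ne_even i s),
      Pi.single_eq_of_ne (odd_ne_even i s), Pi.single_eq_of_ne (even_ne_even hi),
      pderiv_num'])]
  simp [pderiv_X_of_ne (zero_ne_even s), pderiv_X_self, pderiv_X_of_ne (odd_ne_even s s),
    Pi.single_eq_of_ne (odd_ne_even s s), Pi.single_eq_same,
    Pi.single_eq_of_ne (zero_ne_even s), Pi.single_eq_of_ne (zero_ne_even' s), pderiv_num']
  try ring

lemma pdB_even (s : Fin n) : pderiv (evenVar n s) (Bbar k n) =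
    - X (oddVar n s)^2 + 6 * X (oddVar n s) * X (evenVar n s) - 9 * X (evenVar n s)^2 := by
  unfold Bbar
  rw [map_add, map_sum, Fintype.sum_eq_single s (fun i hi => by
    simp [pderiv_X_of_ne (even_ne_even hi), pderiv_X_of_ne (odd_ne_even i s),
      Pi.single_eq_of_ne (odd_ne_even i s), Pi.single_eq_of_ne (even_ne_even hi),
      pderiv_num'])]
  simp [pderiv_X_of_ne (zero_ne_even s), pderiv_X_self, pderiv_X_of_ne (odd_ne_even s s),
    Pi.single_eq_of_ne (odd_ne_even s s), Pi.single_eq_same,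
    Pi.single_eq_of_ne (zero_ne_even s), Pi.single_eq_of_ne (zero_ne_even' s), pderiv_num']
  try ring

/- rewritten forms of Abar, Bbar -/

lemma Abar_eq : Abar k n = X ⟨0, by omega⟩ ^ 3 + ∑ i : Fin n,
    (X (oddVar n i) + 3 * X (evenVar n i)) * (X (oddVar n i)^2 + 3 * X (evenVar n i)^2) := by
  unfold Abar; congr 1; exact Finset.sum_congr rfl (fun i _ => by ring)

lemma Bbar_eq : Bbar k n = X ⟨0, by omega⟩ ^ 3 + ∑ i : Fin n,
    (X (oddVar n i) - X (evenVar n i)) * (X (oddVar n i)^2 + 3 * X (evenVar n i)^2) := by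
  unfold Bbar; congr 1; exact Finset.sum_congr rfl (fun i _ => by ring)

/- membership helpers -/

lemma mem3 {R : Type*} [CommRing R] {J : Ideal R} {g1 g2 g3 c1 c2 c3 P : R}
    (h1 : g1 ∈ J) (h2 : g2 ∈ J) (h3 : g3 ∈ J) (e : P = c1*g1 + c2*g2 + c3*g3) : P ∈ J := by
  rw [e]
  exact add_mem (add_mem (Ideal.mul_mem_left _ _ h1) (Ideal.mul_mem_left _ _ h2))
    (Ideal.mul_mem_left _ _ h3)

lemma cancel_C {σ : Type} {J : Ideal (MvPolynomial σ k)} {c : k} (hc : c ≠ 0)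
    {Q : MvPolynomial σ k} (h : C c * Q ∈ J) : Q ∈ J := by
  have h2 := Ideal.mul_mem_left J (C c⁻¹) h
  rwa [← mul_assoc, ← C_mul, inv_mul_cancel₀ hc, C_1, one_mul] at h2

/- generators of the Z-ideal -/

lemma huJ : (X ⟨0, by omega⟩ : MvPolynomial (Fin (2*n+1)) k) ∈ Ideal.span (Zequations k n) :=
  Ideal.subset_span (Set.mem_insert _ _)

lemma hpJ (a : Fin n) : (X (oddVar n a)^2 + 3 * X (evenVar n a)^2 : MvPolynomial (Fin (2*n+1)) k)
    ∈ Ideal.span (Zequations k n) :=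
  Ideal.subset_span (Set.mem_insert_iff.mpr (Or.inr (Set.mem_union_left _ ⟨a, rfl⟩)))

lemma var_eq1 (a : Fin n) (h : a.1 < n - 1) : sVar1 n ⟨a.1, h⟩ = oddVar n a := rfl
lemma var_eq2 (a : Fin n) (h : a.1 < n - 1) : sVar2 n ⟨a.1, h⟩ = evenVar n a := rfl
lemma var_eq3 (b : Fin n) (hb : 1 ≤ b.1) (h : b.1 - 1 < n - 1) :
    tVar3 n ⟨b.1 - 1, h⟩ = oddVar n b := by
  apply Fin.ext; show 2 * (b.1 - 1) + 3 = 2 * b.1 + 1; omega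
lemma var_eq4 (b : Fin n) (hb : 1 ≤ b.1) (h : b.1 - 1 < n - 1) :
    tVar4 n ⟨b.1 - 1, h⟩ = evenVar n b := by
  apply Fin.ext; show 2 * (b.1 - 1) + 4 = 2 * b.1 + 2; omega

lemma hqJ {a b : Fin n} (hab : a.1 < b.1) :
    (X (oddVar n a) * X (oddVar n b) + 3 * X (evenVar n a) * X (evenVar n b) :
      MvPolynomial (Fin (2*n+1)) k) ∈ Ideal.span (Zequations k n) := by
  have hs : a.1 < n - 1 := by have := b.2; omega
  have ht : b.1 - 1 < n - 1 := by have := b.2; omega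
  have hmem : (X (sVar1 n ⟨a.1, hs⟩) * X (tVar3 n ⟨b.1 - 1, ht⟩)
      + 3 * X (sVar2 n ⟨a.1, hs⟩) * X (tVar4 n ⟨b.1 - 1, ht⟩) : MvPolynomial (Fin (2*n+1)) k)
      ∈ Zequations k n :=
    Set.mem_insert_iff.mpr (Or.inr (Set.mem_union_right _
      ⟨⟨a.1, hs⟩, ⟨b.1 - 1, ht⟩, by show a.1 ≤ b.1 - 1; omega, Or.inl rfl⟩))
  have h := Ideal.subset_span hmem
  rwa [var_eq1 a hs, var_eq2 a hs, var_eq3 b (by omega) ht, var_eq4 b (by omega) ht] at h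

lemma hrJ {a b : Fin n} (hab : a.1 < b.1) :
    (X (evenVar n a) * X (oddVar n b) - X (oddVar n a) * X (evenVar n b) :
      MvPolynomial (Fin (2*n+1)) k) ∈ Ideal.span (Zequations k n) := by
  have hs : a.1 < n - 1 := by have := b.2; omega
  have ht : b.1 - 1 < n - 1 := by have := b.2; omega
  have hmem : (X (sVar2 n ⟨a.1, hs⟩) * X (tVar3 n ⟨b.1 - 1, ht⟩)
      - X (sVar1 n ⟨a.1, hs⟩) * X (tVar4 n ⟨b.1 - 1, ht⟩) : MvPolynomial (Fin (2*n+1)) k)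
      ∈ Zequations k n :=
    Set.mem_insert_iff.mpr (Or.inr (Set.mem_union_right _
      ⟨⟨a.1, hs⟩, ⟨b.1 - 1, ht⟩, by show a.1 ≤ b.1 - 1; omega, Or.inr rfl⟩))
  have h := Ideal.subset_span hmem
  rwa [var_eq1 a hs, var_eq2 a hs, var_eq3 b (by omega) ht, var_eq4 b (by omega) ht] at h

end Aux

/-- Over a field of characteristic zero, the singular locus of the complete
intersection `Y^{2n-2} = {Ā = B̄ = 0} ⊂ P^{2n}`, taken with its reduced structure, equals
the scheme `Z^{n-1}` with its reduced structure. Algebraically: the radical of the ideal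
generated by `Ā`, `B̄` and the `2 × 2` minors of the Jacobian matrix of `(Ā, B̄)` equals
the radical of the ideal generated by the defining equations of `Z^{n-1}`. -/
theorem singular_locus_eq_Z (k : Type) [Field k] [CharZero k] (n : ℕ) (hn : 2 ≤ n) :
    (Ideal.span ({Abar k n, Bbar k n} ∪ jacobianMinors k n)).radical =
      (Ideal.span (Zequations k n)).radical := by
  set J := Ideal.span (Zequations k n) with hJdef
  set I := Ideal.span ({Abar k n, Bbar k n} ∪ jacobianMinors k n) with hIdef
  -- Direction 1 : I ≤ J
  have hIJ : I ≤ J := by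
    rw [hIdef, Ideal.span_le]
    rintro P (hP | ⟨i, j, rfl⟩)
    · -- Abar and Bbar are in J
      have hA : Abar k n ∈ J := by
        rw [Abar_eq]
        refine add_mem ?_ (Ideal.sum_mem _ fun i _ => Ideal.mul_mem_left _ _ (hpJ i))
        exact Ideal.pow_mem_of_mem _ huJ 3 (by omega)
      have hB : Bbar k n ∈ J := by
        rw [Bbar_eq]
        refine add_mem ?_ (Ideal.sum_mem _ fun i _ => Ideal.mul_mem_left _ _ (hpJ i))
        exact Ideal.pow_mem_of_mem _ huJ 3 (by omega)
      rcases hP with rfl | rfl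
      · exact hA
      · exact hB
    · -- the minors are in J
      rcases classifyVar i with rfl | ⟨a, rfl⟩ | ⟨a, rfl⟩ <;>
        rcases classifyVar j with rfl | ⟨b, rfl⟩ | ⟨b, rfl⟩
      -- (0,0)
      · refine mem3 huJ huJ huJ (c1 := 0) (c2 := 0) (c3 := 0) ?_
        simp only [pdA_zero, pdB_zero]; ring
      -- (0, odd b)
      · refine mem3 huJ huJ huJ
          (c1 := -24 * X (⟨0, by omega⟩ : Fin (2*n+1)) * X (oddVar n b) * X (evenVar n b))
          (c2 := 0) (c3 := 0) ?_
        simp only [pdA_zero, pdB_zero, pdA_odd, pdB_odd]; ring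
      -- (0, even b)
      · refine mem3 huJ huJ huJ
          (c1 := -12 * X (⟨0, by omega⟩ : Fin (2*n+1)) *
            (X (oddVar n b)^2 + 9 * X (evenVar n b)^2)) (c2 := 0) (c3 := 0) ?_
        simp only [pdA_zero, pdB_zero, pdA_even, pdB_even]; ring
      -- (odd a, 0)
      · refine mem3 huJ huJ huJ
          (c1 := 24 * X (⟨0, by omega⟩ : Fin (2*n+1)) * X (oddVar n a) * X (evenVar n a))
          (c2 := 0) (c3 := 0) ?_
        simp only [pdA_zero, pdB_zero, pdA_odd, pdB_odd]; ring
      -- (odd a, odd b)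
      · rcases lt_trichotomy a.1 b.1 with hab | hab | hab
        · refine mem3 (hpJ a) (hpJ b) (hrJ hab)
            (c1 := -24 * X (oddVar n b) * X (evenVar n b))
            (c2 := 24 * X (oddVar n a) * X (evenVar n a))
            (c3 := 48 * X (evenVar n a) * X (evenVar n b)) ?_
          simp only [pdA_odd, pdB_odd]; ring
        · have : a = b := Fin.ext hab
          subst this
          refine mem3 (hpJ a) (hpJ a) (hpJ a) (c1 := 0) (c2 := 0) (c3 := 0) ?_
          simp only [pdA_odd, pdB_odd]; ring
        · refine mem3 (hpJ b) (hpJ a) (hrJ hab)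
            (c1 := 24 * X (oddVar n a) * X (evenVar n a))
            (c2 := -24 * X (oddVar n b) * X (evenVar n b))
            (c3 := -48 * X (evenVar n b) * X (evenVar n a)) ?_
          simp only [pdA_odd, pdB_odd]; ring
      -- (odd a, even b)
      · rcases lt_trichotomy a.1 b.1 with hab | hab | hab
        · refine mem3 (hpJ a) (hpJ b) (hqJ hab)
            (c1 := -108 * X (evenVar n b)^2 - 12 * X (oddVar n b)^2)
            (c2 := 24 * X (evenVar n a)^2)
            (c3 := 48 * X (evenVar n a) * X (evenVar n b)) ?_
          simp only [pdA_odd, pdB_even, pdA_even, pdB_odd]; ring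
        · have : a = b := Fin.ext hab
          subst this
          refine mem3 (hpJ a) (hpJ a) (hpJ a)
            (c1 := -12 * (X (oddVar n a)^2 + 3 * X (evenVar n a)^2)) (c2 := 0) (c3 := 0) ?_
          simp only [pdA_odd, pdB_even, pdA_even, pdB_odd]; ring
        · -- a > b : M(x_a, y_b) = -M(y_b, x_a)
          refine mem3 (hpJ b) (hpJ a) (hqJ hab)
            (c1 := -12 * X (evenVar n a)^2 - 12 * X (oddVar n a)^2)
            (c2 := -72 * X (evenVar n b)^2)
            (c3 := 48 * X (evenVar n b) * X (evenVar n a)) ?_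
          simp only [pdA_odd, pdB_even, pdA_even, pdB_odd]; ring
      -- (even a, 0)
      · refine mem3 huJ huJ huJ
          (c1 := 12 * X (⟨0, by omega⟩ : Fin (2*n+1)) *
            (X (oddVar n a)^2 + 9 * X (evenVar n a)^2)) (c2 := 0) (c3 := 0) ?_
        simp only [pdA_zero, pdB_zero, pdA_even, pdB_even]; ring
      -- (even a, odd b)
      · rcases lt_trichotomy a.1 b.1 with hab | hab | hab
        · refine mem3 (hpJ a) (hpJ b) (hqJ hab)
            (c1 := 12 * X (evenVar n b)^2 + 12 * X (oddVar n b)^2)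
            (c2 := 72 * X (evenVar n a)^2)
            (c3 := -48 * X (evenVar n a) * X (evenVar n b)) ?_
          simp only [pdA_odd, pdB_even, pdA_even, pdB_odd]; ring
        · have : a = b := Fin.ext hab
          subst this
          refine mem3 (hpJ a) (hpJ a) (hpJ a)
            (c1 := 12 * (X (oddVar n a)^2 + 3 * X (evenVar n a)^2)) (c2 := 0) (c3 := 0) ?_
          simp only [pdA_odd, pdB_even, pdA_even, pdB_odd]; ring
        · refine mem3 (hpJ b) (hpJ a) (hqJ hab)
            (c1 := 108 * X (evenVar n a)^2 + 12 * X (oddVar n a)^2)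
            (c2 := -24 * X (evenVar n b)^2)
            (c3 := -48 * X (evenVar n b) * X (evenVar n a)) ?_
          simp only [pdA_odd, pdB_even, pdA_even, pdB_odd]; ring
      -- (even a, even b)
      · rcases lt_trichotomy a.1 b.1 with hab | hab | hab
        · refine mem3 (hpJ a) (hpJ b) (hrJ hab)
            (c1 := 24 * X (oddVar n b) * X (evenVar n b))
            (c2 := -24 * X (oddVar n a) * X (evenVar n a))
            (c3 := 144 * X (evenVar n a) * X (evenVar n b)) ?_
          simp only [pdA_even, pdB_even]; ring
        · have : a = b := Fin.ext hab
          subst this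
          refine mem3 (hpJ a) (hpJ a) (hpJ a) (c1 := 0) (c2 := 0) (c3 := 0) ?_
          simp only [pdA_even, pdB_even]; ring
        · refine mem3 (hpJ b) (hpJ a) (hrJ hab)
            (c1 := -24 * X (oddVar n a) * X (evenVar n a))
            (c2 := 24 * X (oddVar n b) * X (evenVar n b))
            (c3 := -144 * X (evenVar n b) * X (evenVar n a)) ?_
          simp only [pdA_even, pdB_even]; ring
  -- ingredients for Direction 2
  have hAI : Abar k n ∈ I := Ideal.subset_span (Or.inl (Set.mem_insert _ _))
  have hMI : ∀ i j : Fin (2*n+1),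
      pderiv i (Abar k n) * pderiv j (Bbar k n)
        - pderiv j (Abar k n) * pderiv i (Bbar k n) ∈ I :=
    fun i j => Ideal.subset_span (Or.inr ⟨i, j, rfl⟩)
  -- each p_a squared is in I
  have hpI : ∀ a : Fin n,
      (X (oddVar n a)^2 + 3 * X (evenVar n a)^2 : MvPolynomial (Fin (2*n+1)) k)^2 ∈ I := by
    intro a
    refine cancel_C (c := -12) (by norm_num) ?_
    have e : (C (-12 : k) : MvPolynomial (Fin (2*n+1)) k) = -12 := by
      rw [map_neg, map_ofNat]
    rw [e, show ((-12 : MvPolynomial (Fin (2*n+1)) k) *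
        (X (oddVar n a)^2 + 3 * X (evenVar n a)^2)^2) =
      pderiv (oddVar n a) (Abar k n) * pderiv (evenVar n a) (Bbar k n)
        - pderiv (evenVar n a) (Abar k n) * pderiv (oddVar n a) (Bbar k n) by
        simp only [pdA_odd, pdB_even, pdA_even, pdB_odd]; ring]
    exact hMI _ _
  have hpRad : ∀ a : Fin n,
      (X (oddVar n a)^2 + 3 * X (evenVar n a)^2 : MvPolynomial (Fin (2*n+1)) k)
        ∈ I.radical := fun a => Ideal.mem_radical_of_pow_mem (Ideal.le_radical (hpI a))
  -- u₀ is in the radical of I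
  have huRad : (X ⟨0, by omega⟩ : MvPolynomial (Fin (2*n+1)) k) ∈ I.radical := by
    refine Ideal.mem_radical_of_pow_mem (m := 3) ?_
    have e : (X ⟨0, by omega⟩ : MvPolynomial (Fin (2*n+1)) k)^3 = Abar k n
        - ∑ i : Fin n, (X (oddVar n i) + 3 * X (evenVar n i)) *
            (X (oddVar n i)^2 + 3 * X (evenVar n i)^2) := by
      rw [Abar_eq]; ring
    rw [e]
    exact sub_mem (Ideal.le_radical hAI)
      (Ideal.sum_mem _ fun i _ => Ideal.mul_mem_left _ _ (hpRad i))
  -- q and r are in the radical of I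
  have hqrRad : ∀ a b : Fin n, a.1 < b.1 →
      (X (oddVar n a) * X (oddVar n b) + 3 * X (evenVar n a) * X (evenVar n b) :
        MvPolynomial (Fin (2*n+1)) k) ∈ I.radical ∧
      (X (evenVar n a) * X (oddVar n b) - X (oddVar n a) * X (evenVar n b) :
        MvPolynomial (Fin (2*n+1)) k) ∈ I.radical := by
    intro a b hab
    have main : ∀ P : Ideal (MvPolynomial (Fin (2*n+1)) k), I ≤ P → P.IsPrime →
        (X (oddVar n a) * X (oddVar n b) + 3 * X (evenVar n a) * X (evenVar n b) :
          MvPolynomial (Fin (2*n+1)) k) ∈ P ∧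
        (X (evenVar n a) * X (oddVar n b) - X (oddVar n a) * X (evenVar n b) :
          MvPolynomial (Fin (2*n+1)) k) ∈ P := by
      intro P hIP hP
      have hpa : (X (oddVar n a)^2 + 3 * X (evenVar n a)^2 :
          MvPolynomial (Fin (2*n+1)) k) ∈ P := hP.mem_of_pow_mem 2 (hIP (hpI a))
      have hpb : (X (oddVar n b)^2 + 3 * X (evenVar n b)^2 :
          MvPolynomial (Fin (2*n+1)) k) ∈ P := hP.mem_of_pow_mem 2 (hIP (hpI b))
      by_cases hya : (X (evenVar n a) : MvPolynomial (Fin (2*n+1)) k) ∈ P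
      · have hxa : (X (oddVar n a) : MvPolynomial (Fin (2*n+1)) k) ∈ P := by
          refine hP.mem_of_pow_mem 2 ?_
          rw [show (X (oddVar n a) : MvPolynomial (Fin (2*n+1)) k)^2 =
            (X (oddVar n a)^2 + 3 * X (evenVar n a)^2)
              - (3 * X (evenVar n a)) * X (evenVar n a) by ring]
          exact sub_mem hpa (Ideal.mul_mem_left _ _ hya)
        constructor
        · rw [show (X (oddVar n a) * X (oddVar n b) + 3 * X (evenVar n a) * X (evenVar n b) :
              MvPolynomial (Fin (2*n+1)) k) =
              X (oddVar n b) * X (oddVar n a) + (3 * X (evenVar n b)) * X (evenVar n a) by ring]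
          exact add_mem (Ideal.mul_mem_left _ _ hxa) (Ideal.mul_mem_left _ _ hya)
        · rw [show (X (evenVar n a) * X (oddVar n b) - X (oddVar n a) * X (evenVar n b) :
              MvPolynomial (Fin (2*n+1)) k) =
              X (oddVar n b) * X (evenVar n a) - X (evenVar n b) * X (oddVar n a) by ring]
          exact sub_mem (Ideal.mul_mem_left _ _ hya) (Ideal.mul_mem_left _ _ hxa)
      by_cases hyb : (X (evenVar n b) : MvPolynomial (Fin (2*n+1)) k) ∈ P
      · have hxb : (X (oddVar n b) : MvPolynomial (Fin (2*n+1)) k) ∈ P := by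
          refine hP.mem_of_pow_mem 2 ?_
          rw [show (X (oddVar n b) : MvPolynomial (Fin (2*n+1)) k)^2 =
            (X (oddVar n b)^2 + 3 * X (evenVar n b)^2)
              - (3 * X (evenVar n b)) * X (evenVar n b) by ring]
          exact sub_mem hpb (Ideal.mul_mem_left _ _ hyb)
        constructor
        · rw [show (X (oddVar n a) * X (oddVar n b) + 3 * X (evenVar n a) * X (evenVar n b) :
              MvPolynomial (Fin (2*n+1)) k) =
              X (oddVar n a) * X (oddVar n b) + (3 * X (evenVar n a)) * X (evenVar n b) by ring]
          exact add_mem (Ideal.mul_mem_left _ _ hxb) (Ideal.mul_mem_left _ _ hyb)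
        · rw [show (X (evenVar n a) * X (oddVar n b) - X (oddVar n a) * X (evenVar n b) :
              MvPolynomial (Fin (2*n+1)) k) =
              X (evenVar n a) * X (oddVar n b) - X (oddVar n a) * X (evenVar n b) by ring]
          exact sub_mem (Ideal.mul_mem_left _ _ hxb) (Ideal.mul_mem_left _ _ hyb)
      -- y_a, y_b ∉ P : use the minors
      have hnum : ∀ Q : MvPolynomial (Fin (2*n+1)) k,
          (48 : MvPolynomial (Fin (2*n+1)) k) * Q ∈ P → Q ∈ P := by
        intro Q hQ
        rcases hP.mem_or_mem hQ with h | h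
        · exfalso
          apply hP.ne_top
          rw [Ideal.eq_top_iff_one]
          have h2 := Ideal.mul_mem_left P (C (48 : k)⁻¹) h
          rwa [← map_ofNat (C : k →+* MvPolynomial (Fin (2*n+1)) k) 48,
            ← C_mul, inv_mul_cancel₀ (by norm_num), C_1] at h2
        · exact h
      constructor
      · -- q : use minor M(x_a, y_b)
        have key : (X (evenVar n a)) * ((X (evenVar n b)) *
            ((48 : MvPolynomial (Fin (2*n+1)) k) *
            (X (oddVar n a) * X (oddVar n b) + 3 * X (evenVar n a) * X (evenVar n b))))
            ∈ P := by
          rw [show (X (evenVar n a)) * ((X (evenVar n b)) *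
              ((48 : MvPolynomial (Fin (2*n+1)) k) *
              (X (oddVar n a) * X (oddVar n b) + 3 * X (evenVar n a) * X (evenVar n b)))) =
            (pderiv (oddVar n a) (Abar k n) * pderiv (evenVar n b) (Bbar k n)
                - pderiv (evenVar n b) (Abar k n) * pderiv (oddVar n a) (Bbar k n))
              + (108 * X (evenVar n b)^2 + 12 * X (oddVar n b)^2) *
                  (X (oddVar n a)^2 + 3 * X (evenVar n a)^2)
              - (24 * X (evenVar n a)^2) *
                  (X (oddVar n b)^2 + 3 * X (evenVar n b)^2) by
            simp only [pdA_odd, pdB_even, pdA_even, pdB_odd]; ring]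
          exact sub_mem (add_mem (hIP (hMI _ _)) (Ideal.mul_mem_left _ _ hpa))
            (Ideal.mul_mem_left _ _ hpb)
        rcases hP.mem_or_mem key with h | h
        · exact absurd h hya
        rcases hP.mem_or_mem h with h | h
        · exact absurd h hyb
        exact hnum _ h
      · -- r : use minor M(x_a, x_b)
        have key : (X (evenVar n a)) * ((X (evenVar n b)) *
            ((48 : MvPolynomial (Fin (2*n+1)) k) *
            (X (evenVar n a) * X (oddVar n b) - X (oddVar n a) * X (evenVar n b))))
            ∈ P := by
          rw [show (X (evenVar n a)) * ((X (evenVar n b)) *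
              ((48 : MvPolynomial (Fin (2*n+1)) k) *
              (X (evenVar n a) * X (oddVar n b) - X (oddVar n a) * X (evenVar n b)))) =
            (pderiv (oddVar n a) (Abar k n) * pderiv (oddVar n b) (Bbar k n)
                - pderiv (oddVar n b) (Abar k n) * pderiv (oddVar n a) (Bbar k n))
              + (24 * X (oddVar n b) * X (evenVar n b)) *
                  (X (oddVar n a)^2 + 3 * X (evenVar n a)^2)
              - (24 * X (oddVar n a) * X (evenVar n a)) *
                  (X (oddVar n b)^2 + 3 * X (evenVar n b)^2) by
            simp only [pdA_odd, pdB_odd]; ring]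
          exact sub_mem (add_mem (hIP (hMI _ _)) (Ideal.mul_mem_left _ _ hpa))
            (Ideal.mul_mem_left _ _ hpb)
        rcases hP.mem_or_mem key with h | h
        · exact absurd h hya
        rcases hP.mem_or_mem h with h | h
        · exact absurd h hyb
        exact hnum _ h
    constructor <;> rw [Ideal.radical_eq_sInf, Ideal.mem_sInf] <;> intro P hPm
    · exact (main P hPm.1 hPm.2).1
    · exact (main P hPm.1 hPm.2).2
  -- Direction 2 : J ≤ I.radical
  have hJI : J ≤ I.radical := by
    rw [hJdef, Ideal.span_le]
    rintro g (rfl | ⟨i, rfl⟩ | ⟨s, t, hst, (rfl | rfl)⟩)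
    · exact huRad
    · exact hpRad i
    · have hs : s.1 < n := by have := s.2; omega
      have ht : t.1 + 1 < n := by have := t.2; omega
      have e1 : sVar1 n s = oddVar n ⟨s.1, hs⟩ := rfl
      have e2 : sVar2 n s = evenVar n ⟨s.1, hs⟩ := rfl
      have e3 : tVar3 n t = oddVar n ⟨t.1 + 1, ht⟩ := by
        apply Fin.ext; show 2 * t.1 + 3 = 2 * (t.1 + 1) + 1; omega
      have e4 : tVar4 n t = evenVar n ⟨t.1 + 1, ht⟩ := by
        apply Fin.ext; show 2 * t.1 + 4 = 2 * (t.1 + 1) + 2; omega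
      rw [e1, e2, e3, e4]
      exact (hqrRad ⟨s.1, hs⟩ ⟨t.1 + 1, ht⟩ (by show s.1 < t.1 + 1; omega)).1
    · have hs : s.1 < n := by have := s.2; omega
      have ht : t.1 + 1 < n := by have := t.2; omega
      have e1 : sVar1 n s = oddVar n ⟨s.1, hs⟩ := rfl
      have e2 : sVar2 n s = evenVar n ⟨s.1, hs⟩ := rfl
      have e3 : tVar3 n t = oddVar n ⟨t.1 + 1, ht⟩ := by
        apply Fin.ext; show 2 * t.1 + 3 = 2 * (t.1 + 1) + 1; omega
      have e4 : tVar4 n t = evenVar n ⟨t.1 + 1, ht⟩ := by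
        apply Fin.ext; show 2 * t.1 + 4 = 2 * (t.1 + 1) + 2; omega
      rw [e1, e2, e3, e4]
      exact (hqrRad ⟨s.1, hs⟩ ⟨t.1 + 1, ht⟩ (by show s.1 < t.1 + 1; omega)).2
  -- conclusion
  refine le_antisymm ?_ ?_
  · exact Ideal.radical_le_radical_iff.mpr (le_trans hIJ Ideal.le_radical)
  · exact Ideal.radical_le_radical_iff.mpr hJI
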